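/- Let (X, d) be a complete separable metric space with finite diameter, (m_x)_{x∈X} a Markov transition probability kernel on X, ω a modulus of continuity, and f : X → ℝ a bounded ω-Hölder function. For n ≥ 1 let m^n_x denote the law on X^n of the first n steps of the chain with kernel (m_x) started at x, and f^n(x̄) = f(x_1) + ⋯ + f(x_n) for x̄ = (x_1,…,x_n). Assume f is flat with respect to some coupling: there is a family of probability measures Π^n_{x,y} on X^n × X^n, measurable in (x,y), whose two marginals are m^n_x and m^n_y, and a constant C > 0 such that for all n, x, y and Π^n_{x,y}-almost every (x̄, ȳ), |f^n(x̄) − f^n(ȳ)| ≤ C ω(d(x,y)). Let L φ(x) = ∫_X e^{f(y)} φ(y) dm_x(y). Then: (i) for all n and all x, y ∈ X, L^n 1(x) ≤ e^{C ω(diam X)} L^n 1(y); (ii) the quantity ϱ = limsup_{n→∞} (L^n 1(x))^{1/n} is finite, strictly positive, and independent of x; (iii) there exist constants A, B > 0 such that A ϱ^n ≤ L^n 1(x) ≤ B ϱ^n for all n ≥ 1 and all x ∈ X. -/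

import Mathlib

open MeasureTheory Filter Topology
open scoped ENNReal

/-- The law on `Xⁿ` of the first `n` steps of the Markov chain with kernel `m`
started at `x`. -/
noncomputable def pathLaw {X : Type*} [MeasurableSpace X] (m : X → Measure X) :
    (n : ℕ) → X → Measure (Fin n → X)
  | 0, _ => Measure.dirac (fun i => i.elim0)
  | n + 1, x => (m x).bind fun y => (pathLaw m n y).map (Fin.cons y)

lemma measurable_cons_fun {X : Type*} [MeasurableSpace X] (n : ℕ) :
    Measurable fun q : X × (Fin n → X) => (Fin.cons q.1 q.2 : Fin (n+1) → X) := by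
  refine measurable_pi_iff.2 fun i => ?_
  refine Fin.cases ?_ ?_ i
  · simpa using measurable_fst
  · intro j; simp only [Fin.cons_succ]; exact (measurable_pi_apply j).comp measurable_snd

lemma measurable_cons_left {X : Type*} [MeasurableSpace X] {n : ℕ} (y : X) :
    Measurable (fun p : Fin n → X => (Fin.cons y p : Fin (n+1) → X)) :=
  (measurable_cons_fun n).comp measurable_prodMk_left

lemma measurable_map_consK {X : Type*} [MeasurableSpace X] {n : ℕ}
    {μ : X → Measure (Fin n → X)} (hμ : Measurable μ)
    (hp : ∀ x, IsProbabilityMeasure (μ x)) :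
    Measurable fun y => (μ y).map (fun p => (Fin.cons y p : Fin (n+1) → X)) := by
  refine Measure.measurable_of_measurable_coe _ fun s hs => ?_
  simp_rw [Measure.map_apply (measurable_cons_left _) hs]
  let κ : ProbabilityTheory.Kernel X (Fin n → X) := ⟨μ, hμ⟩
  haveI : ProbabilityTheory.IsMarkovKernel κ := ⟨hp⟩
  have ht : MeasurableSet {q : X × (Fin n → X) | (Fin.cons q.1 q.2 : Fin (n+1) → X) ∈ s} :=
    (measurable_cons_fun n) hs
  exact ProbabilityTheory.Kernel.measurable_kernel_prodMk_left (κ := κ) ht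

lemma pathLaw_aux {X : Type*} [MeasurableSpace X] {m : X → Measure X} (hm : Measurable m)
    (hmp : ∀ x, IsProbabilityMeasure (m x)) (n : ℕ) :
    Measurable (pathLaw m n) ∧ ∀ x, IsProbabilityMeasure (pathLaw m n x) := by
  induction n with
  | zero =>
    have h0 : pathLaw m 0 = fun _ : X => Measure.dirac (fun i : Fin 0 => i.elim0) := rfl
    rw [h0]
    exact ⟨measurable_const, fun x => by infer_instance⟩
  | succ n ih =>
    have hQ : Measurable fun y => (pathLaw m n y).map
        (fun p => (Fin.cons y p : Fin (n+1) → X)) :=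
      measurable_map_consK ih.1 ih.2
    have hsucc : pathLaw m (n+1)
        = fun x => (m x).bind
          (fun y => (pathLaw m n y).map (fun p => (Fin.cons y p : Fin (n+1) → X))) := rfl
    constructor
    · rw [hsucc]; exact (Measure.measurable_bind' hQ).comp hm
    · intro x
      haveI := hmp x
      constructor
      rw [hsucc]
      rw [Measure.bind_apply MeasurableSet.univ hQ.aemeasurable]
      have h1 : ∀ y, ((pathLaw m n y).map
          (fun p => (Fin.cons y p : Fin (n+1) → X))) Set.univ = 1 := by
        intro y
        haveI := ih.2 y
        haveI : IsProbabilityMeasure ((pathLaw m n y).map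
            (fun p => (Fin.cons y p : Fin (n+1) → X))) :=
          Measure.isProbabilityMeasure_map (measurable_cons_left y).aemeasurable
        exact measure_univ
      simp [h1]

/-- The exponential Birkhoff-sum weight on paths. -/
noncomputable def pathE {X : Type*} (f : X → ℝ) (n : ℕ) (p : Fin n → X) : ℝ≥0∞ :=
  ENNReal.ofReal (Real.exp (∑ i, f (p i)))

/-- `Lⁿ1` in lower-integral form. -/
noncomputable def pathG {X : Type*} [MeasurableSpace X] (m : X → Measure X) (f : X → ℝ)
    (n : ℕ) (x : X) : ℝ≥0∞ :=
  ∫⁻ p, pathE f n p ∂ pathLaw m n x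

lemma measurable_pathE {X : Type*} [MeasurableSpace X] {f : X → ℝ} (hf : Measurable f)
    (n : ℕ) : Measurable (pathE f n) := by
  apply ENNReal.measurable_ofReal.comp
  exact Real.continuous_exp.measurable.comp
    (Finset.measurable_sum _ fun i _ => hf.comp (measurable_pi_apply i))

lemma pathE_cons {X : Type*} (f : X → ℝ) (n : ℕ) (y : X) (p : Fin n → X) :
    pathE f (n+1) (Fin.cons y p) = ENNReal.ofReal (Real.exp (f y)) * pathE f n p := by
  unfold pathE
  have h5 : (∑ i, f ((Fin.cons y p : Fin (n+1) → X) i)) = f y + ∑ i, f (p i) := by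
    have h6 : (fun i => f ((Fin.cons y p : Fin (n+1) → X) i))
        = Fin.cons (f y) (fun i => f (p i)) := by
      ext i; refine Fin.cases ?_ ?_ i <;> simp
    calc (∑ i, f ((Fin.cons y p : Fin (n+1) → X) i))
        = ∑ i, (Fin.cons (f y) (fun j => f (p j)) : Fin (n+1) → ℝ) i := by rw [h6]
      _ = f y + ∑ i, f (p i) := Fin.sum_cons _ _
  rw [h5, Real.exp_add, ENNReal.ofReal_mul (Real.exp_pos _).le]

/-- Uniform comparison, finiteness of the spectral radius and uniform
two-sided bounds `A ϱⁿ ≤ Lⁿ1 ≤ B ϱⁿ` for the transfer operator of a flat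
potential on a space of finite diameter. -/
theorem stmt_17
    {X : Type*} [MetricSpace X] [CompleteSpace X]
    [TopologicalSpace.SeparableSpace X]
    [MeasurableSpace X] [BorelSpace X]
    (hdiam : EMetric.diam (Set.univ : Set X) ≠ ⊤)
    (m : X → Measure X) (hmp : ∀ x, IsProbabilityMeasure (m x))
    (hmm : ∀ A : Set X, MeasurableSet A → Measurable fun x => m x A)
    (ω : ℝ → ℝ) (hωc : ContinuousOn ω (Set.Ici 0)) (hωm : MonotoneOn ω (Set.Ici 0))
    (hωconc : ConcaveOn ℝ (Set.Ici 0) ω) (hω0 : ω 0 = 0)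
    (f : X → ℝ) (hfb : ∃ M, ∀ x, |f x| ≤ M)
    (hfH : ∃ Cf : ℝ, ∀ x y, |f x - f y| ≤ Cf * ω (dist x y))
    (Pl : (n : ℕ) → X → X → Measure ((Fin n → X) × (Fin n → X)))
    (hPlp : ∀ n x y, IsProbabilityMeasure (Pl n x y))
    (hPlmeas : ∀ n : ℕ, ∀ A : Set ((Fin n → X) × (Fin n → X)), MeasurableSet A →
      Measurable fun q : X × X => Pl n q.1 q.2 A)
    (hmarg1 : ∀ n x y, (Pl n x y).map Prod.fst = pathLaw m n x)
    (hmarg2 : ∀ n x y, (Pl n x y).map Prod.snd = pathLaw m n y)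
    (C : ℝ) (hC : 0 < C)
    (hflat : ∀ n x y, ∀ᵐ q ∂ (Pl n x y),
      |(∑ i, f (q.1 i)) - ∑ i, f (q.2 i)| ≤ C * ω (dist x y))
    (L : (X → ℝ) → (X → ℝ))
    (hL : ∀ φ x, L φ x = ∫ y, Real.exp (f y) * φ y ∂ m x) :
    (∀ n : ℕ, ∀ x y : X,
      L^[n] (fun _ => 1) x
        ≤ Real.exp (C * ω (Metric.diam (Set.univ : Set X))) * L^[n] (fun _ => 1) y) ∧
    ∃ ϱ : ℝ≥0∞, 0 < ϱ ∧ ϱ ≠ ⊤ ∧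
      (∀ x, Filter.limsup
        (fun n : ℕ => (ENNReal.ofReal (L^[n] (fun _ => 1) x)) ^ ((1 : ℝ) / (n : ℝ)))
        atTop = ϱ) ∧
      ∃ A B : ℝ, 0 < A ∧ 0 < B ∧ ∀ n : ℕ, 1 ≤ n → ∀ x,
        A * ϱ.toReal ^ n ≤ L^[n] (fun _ => 1) x ∧
        L^[n] (fun _ => 1) x ≤ B * ϱ.toReal ^ n := by
  rcases isEmpty_or_nonempty X with hE | hNE
  · exact ⟨fun n x y => (IsEmpty.false x).elim, 1, one_pos, ENNReal.one_ne_top,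
      fun x => (IsEmpty.false x).elim, 1, 1, one_pos, one_pos,
      fun n hn x => (IsEmpty.false x).elim⟩
  obtain ⟨M0, hM0⟩ := hfb
  obtain ⟨Cf, hCf⟩ := hfH
  set M : ℝ := max M0 0 with hMdef
  have hM : ∀ x, |f x| ≤ M := fun x => (hM0 x).trans (le_max_left _ _)
  have hMnn : 0 ≤ M := le_max_right _ _
  -- continuity and measurability of f
  have hfc : Continuous f := by
    refine continuous_iff_continuousAt.2 fun x => ?_
    have hd : Tendsto (fun y => dist y x) (𝓝 x) (𝓝[Set.Ici 0] 0) := by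
      rw [tendsto_nhdsWithin_iff]
      constructor
      · have := (continuous_id.dist (continuous_const (y := x))).tendsto x
        simpa using this
      · exact Eventually.of_forall fun y => dist_nonneg
    have hω' : Tendsto (fun y => Cf * ω (dist y x)) (𝓝 x) (𝓝 (Cf * ω 0)) := by
      exact (((hωc 0 (Set.mem_Ici.2 le_rfl)).tendsto).comp hd).const_mul Cf
    rw [ContinuousAt, tendsto_iff_dist_tendsto_zero]
    refine squeeze_zero (g := fun y => Cf * ω (dist y x)) (fun y => dist_nonneg)
      (fun y => ?_) ?_
    · rw [Real.dist_eq]; exact hCf y x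
    · simpa [hω0] using hω'
  have hfm : Measurable f := hfc.measurable
  have hm : Measurable m := Measure.measurable_of_measurable_coe m hmm
  have hPLm : ∀ n, Measurable (pathLaw m n) := fun n => (pathLaw_aux hm hmp n).1
  have hPLp : ∀ n x, IsProbabilityMeasure (pathLaw m n x) := fun n => (pathLaw_aux hm hmp n).2
  set dX : ℝ := Metric.diam (Set.univ : Set X) with hdXdef
  have hωd : 0 ≤ ω dX := by
    have := hωm (Set.mem_Ici.2 le_rfl) (Set.mem_Ici.2 (Metric.diam_nonneg (s := (Set.univ : Set X)))) (Metric.diam_nonneg (s := (Set.univ : Set X)))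
    rw [hω0] at this; exact this
  set K : ℝ := Real.exp (C * ω dX) with hKdef
  have hKpos : 0 < K := Real.exp_pos _
  have hK1 : 1 ≤ K := Real.one_le_exp (mul_nonneg hC.le hωd)
  set K' : ℝ≥0∞ := ENNReal.ofReal K with hK'def
  have hK'ne : K' ≠ ⊤ := ENNReal.ofReal_ne_top
  have hK'0 : K' ≠ 0 := (ENNReal.ofReal_pos.2 hKpos).ne'
  set E : (n : ℕ) → (Fin n → X) → ℝ≥0∞ := pathE f with hEdef
  have hEm : ∀ n, Measurable (E n) := measurable_pathE hfm
  set G : ℕ → X → ℝ≥0∞ := pathG m f with hGdef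
  have hGeq : ∀ n x, G n x = ∫⁻ p, E n p ∂ pathLaw m n x := fun n x => rfl
  have hGm : ∀ n, Measurable (G n) := fun n =>
    (Measure.measurable_lintegral (hEm n)).comp (hPLm n)
  have hsum_bound : ∀ n, ∀ p : Fin n → X, |∑ i, f (p i)| ≤ n * M := by
    intro n p
    calc |∑ i, f (p i)| ≤ ∑ i, |f (p i)| := Finset.abs_sum_le_sum_abs _ _
      _ ≤ ∑ _i : Fin n, M := Finset.sum_le_sum fun i _ => hM _
      _ = n * M := by simp [Finset.sum_const, Finset.card_univ, nsmul_eq_mul]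
  have hGub : ∀ n x, G n x ≤ ENNReal.ofReal (Real.exp (n * M)) := by
    intro n x
    haveI := hPLp n x
    rw [hGeq]
    calc ∫⁻ p, E n p ∂ pathLaw m n x
        ≤ ∫⁻ _p, ENNReal.ofReal (Real.exp (n * M)) ∂ pathLaw m n x := by
          refine lintegral_mono fun p => ?_
          exact ENNReal.ofReal_le_ofReal
            (Real.exp_le_exp.2 ((abs_le.1 (hsum_bound n p)).2))
      _ = ENNReal.ofReal (Real.exp (n * M)) := by simp
  have hGlb : ∀ (n : ℕ) (x : X), ENNReal.ofReal (Real.exp (-(n * M))) ≤ G n x := by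
    intro n x
    haveI := hPLp n x
    rw [hGeq]
    calc ENNReal.ofReal (Real.exp (-(n * M)))
        = ∫⁻ _p, ENNReal.ofReal (Real.exp (-(n * M))) ∂ pathLaw m n x := by simp
      _ ≤ ∫⁻ p, E n p ∂ pathLaw m n x := by
          refine lintegral_mono fun p => ?_
          exact ENNReal.ofReal_le_ofReal
            (Real.exp_le_exp.2 ((abs_le.1 (hsum_bound n p)).1))
  have hGne : ∀ (n : ℕ) (x : X), G n x ≠ ⊤ := fun n x =>
    ((hGub n x).trans_lt ENNReal.ofReal_lt_top).ne
  have hGpos : ∀ (n : ℕ) (x : X), 0 < G n x := fun n x =>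
    lt_of_lt_of_le (ENNReal.ofReal_pos.2 (Real.exp_pos _)) (hGlb n x)
  have hG0 : ∀ x, G 0 x = 1 := by
    intro x
    rw [hGeq, show pathLaw m 0 x = Measure.dirac (fun i : Fin 0 => i.elim0) from rfl,
      lintegral_dirac' _ (hEm 0)]
    simp [hEdef, pathE]
  -- the key coupling comparison
  have hcomp : ∀ (n : ℕ) (x y : X), G n x ≤ K' * G n y := by
    intro n x y
    haveI := hPlp n x y
    have hd : dist x y ≤ dX := Metric.dist_le_diam_of_mem' hdiam (Set.mem_univ x)
      (Set.mem_univ y)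
    have h1 : G n x = ∫⁻ q, E n q.1 ∂ Pl n x y := by
      rw [hGeq, ← hmarg1 n x y, lintegral_map (hEm n) measurable_fst]
    have h2 : G n y = ∫⁻ q, E n q.2 ∂ Pl n x y := by
      rw [hGeq, ← hmarg2 n x y, lintegral_map (hEm n) measurable_snd]
    rw [h1, h2, ← lintegral_const_mul' _ _ hK'ne]
    refine lintegral_mono_ae ?_
    filter_upwards [hflat n x y] with q hq
    have h3 : (∑ i, f (q.1 i)) ≤ C * ω dX + ∑ i, f (q.2 i) := by
      have h4 : C * ω (dist x y) ≤ C * ω dX :=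
        mul_le_mul_of_nonneg_left
          (hωm (Set.mem_Ici.2 dist_nonneg)
            (Set.mem_Ici.2 (Metric.diam_nonneg (s := (Set.univ : Set X)))) hd) hC.le
      have h5 := (abs_le.1 hq).2
      linarith
    calc E n q.1 = ENNReal.ofReal (Real.exp (∑ i, f (q.1 i))) := rfl
      _ ≤ ENNReal.ofReal (Real.exp (C * ω dX + ∑ i, f (q.2 i))) :=
          ENNReal.ofReal_le_ofReal (Real.exp_le_exp.2 h3)
      _ = K' * E n q.2 := by
          rw [Real.exp_add, ENNReal.ofReal_mul (Real.exp_pos _).le]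
          rfl
  -- the recursion for G
  have hrec : ∀ (n : ℕ) (x : X), G (n+1) x
      = ∫⁻ y, ENNReal.ofReal (Real.exp (f y)) * G n y ∂ m x := by
    intro n x
    have hQ : Measurable fun y => (pathLaw m n y).map
        (fun p => (Fin.cons y p : Fin (n+1) → X)) :=
      measurable_map_consK (hPLm n) (hPLp n)
    have hstep : pathLaw m (n+1) x = (m x).bind
        (fun y => (pathLaw m n y).map (fun p => (Fin.cons y p : Fin (n+1) → X))) := rfl
    rw [hGeq, hstep, Measure.lintegral_bind hQ.aemeasurable (hEm (n+1)).aemeasurable]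
    refine lintegral_congr fun y => ?_
    rw [lintegral_map (hEm (n+1)) (measurable_cons_left y)]
    have h7 : ∀ p : Fin n → X, E (n+1) (Fin.cons y p)
        = ENNReal.ofReal (Real.exp (f y)) * E n p := fun p => pathE_cons f n y p
    simp only [h7]
    rw [lintegral_const_mul' _ _ ENNReal.ofReal_ne_top, hGeq]
  -- representation of the iterates of L
  have hGrepr : ∀ (n : ℕ) (x : X), L^[n] (fun _ => 1) x = (G n x).toReal := by
    intro n
    induction n with
    | zero => intro x; simp [hG0 x]
    | succ n ih =>
      intro x
      rw [Function.iterate_succ_apply', hL]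
      haveI := hmp x
      calc ∫ y, Real.exp (f y) * L^[n] (fun _ => 1) y ∂ m x
          = ∫ y, (ENNReal.ofReal (Real.exp (f y)) * G n y).toReal ∂ m x := by
            refine integral_congr_ae (Eventually.of_forall fun y => ?_)
            simp only [ih, ENNReal.toReal_mul, ENNReal.toReal_ofReal (Real.exp_nonneg _)]
        _ = (∫⁻ y, ENNReal.ofReal (Real.exp (f y)) * G n y ∂ m x).toReal := by
            refine integral_toReal ?_ ?_
            · exact ((ENNReal.measurable_ofReal.comp
                (Real.continuous_exp.measurable.comp hfm)).mul (hGm n)).aemeasurable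
            · refine Eventually.of_forall fun y => ?_
              exact ENNReal.mul_lt_top ENNReal.ofReal_lt_top (hGne n y).lt_top
        _ = (G (n+1) x).toReal := by rw [hrec]
  -- real version of the comparison
  have hcompR : ∀ (n : ℕ) (x y : X),
      L^[n] (fun _ => 1) x ≤ K * L^[n] (fun _ => 1) y := by
    intro n x y
    rw [hGrepr n x, hGrepr n y]
    calc (G n x).toReal ≤ (K' * G n y).toReal :=
        ENNReal.toReal_mono (ENNReal.mul_ne_top hK'ne (hGne n y)) (hcomp n x y)
      _ = K * (G n y).toReal := by
          rw [ENNReal.toReal_mul, hK'def, ENNReal.toReal_ofReal hKpos.le]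
  refine ⟨hcompR, ?_⟩
  obtain ⟨x0⟩ := hNE
  -- submultiplicativity
  have hsub : ∀ (q n : ℕ) (x : X), G (n + q) x ≤ K' * G q x0 * G n x := by
    intro q n
    induction n with
    | zero =>
      intro x
      simpa [hG0 x] using hcomp q x x0
    | succ n ih =>
      intro x
      have harr : n + 1 + q = (n + q) + 1 := by omega
      rw [harr, hrec (n+q) x]
      have h9 : ∀ y : X, ENNReal.ofReal (Real.exp (f y)) * G (n + q) y
          ≤ (K' * G q x0) * (ENNReal.ofReal (Real.exp (f y)) * G n y) := by
        intro y
        calc ENNReal.ofReal (Real.exp (f y)) * G (n + q) y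
            ≤ ENNReal.ofReal (Real.exp (f y)) * (K' * G q x0 * G n y) :=
              mul_le_mul_right (ih y) _
          _ = (K' * G q x0) * (ENNReal.ofReal (Real.exp (f y)) * G n y) := by ring
      calc ∫⁻ y, ENNReal.ofReal (Real.exp (f y)) * G (n + q) y ∂ m x
          ≤ ∫⁻ y, (K' * G q x0) * (ENNReal.ofReal (Real.exp (f y)) * G n y) ∂ m x :=
            lintegral_mono h9
        _ = (K' * G q x0) * ∫⁻ y, ENNReal.ofReal (Real.exp (f y)) * G n y ∂ m x :=
            lintegral_const_mul' _ _ (ENNReal.mul_ne_top hK'ne (hGne q x0))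
        _ = K' * G q x0 * G (n + 1) x := by rw [← hrec n x]
  -- supermultiplicativity
  have hsup : ∀ (q n : ℕ) (x : X), K'⁻¹ * G q x0 * G n x ≤ G (n + q) x := by
    intro q n
    induction n with
    | zero =>
      intro x
      have h10 : K'⁻¹ * G q x0 ≤ G q x := by
        calc K'⁻¹ * G q x0 ≤ K'⁻¹ * (K' * G q x) := mul_le_mul_right (hcomp q x0 x) _
          _ = G q x := by rw [← mul_assoc, ENNReal.inv_mul_cancel hK'0 hK'ne, one_mul]
      simpa [hG0 x] using h10
    | succ n ih =>
      intro x
      have harr : n + 1 + q = (n + q) + 1 := by omega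
      rw [harr, hrec (n+q) x]
      have h9 : ∀ y : X, (K'⁻¹ * G q x0) * (ENNReal.ofReal (Real.exp (f y)) * G n y)
          ≤ ENNReal.ofReal (Real.exp (f y)) * G (n + q) y := by
        intro y
        calc (K'⁻¹ * G q x0) * (ENNReal.ofReal (Real.exp (f y)) * G n y)
            = ENNReal.ofReal (Real.exp (f y)) * (K'⁻¹ * G q x0 * G n y) := by ring
          _ ≤ ENNReal.ofReal (Real.exp (f y)) * G (n + q) y := mul_le_mul_right (ih y) _
      calc K'⁻¹ * G q x0 * G (n + 1) x
          = ∫⁻ y, (K'⁻¹ * G q x0) * (ENNReal.ofReal (Real.exp (f y)) * G n y) ∂ m x := by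
            rw [hrec n x, lintegral_const_mul' _ _
              (ENNReal.mul_ne_top (ENNReal.inv_ne_top.2 hK'0) (hGne q x0))]
        _ ≤ ∫⁻ y, ENNReal.ofReal (Real.exp (f y)) * G (n + q) y ∂ m x := lintegral_mono h9
  -- real sequences
  set a : ℕ → ℝ := fun n => (G n x0).toReal with hadef
  have hapos : ∀ n, 0 < a n := fun n => ENNReal.toReal_pos (hGpos n x0).ne' (hGne n x0)
  have ha_le : ∀ p q : ℕ, a (p + q) ≤ K * a q * a p := by
    intro p q
    have h1 := ENNReal.toReal_mono
      (ENNReal.mul_ne_top (ENNReal.mul_ne_top hK'ne (hGne q x0)) (hGne p x0)) (hsub q p x0)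
    rwa [ENNReal.toReal_mul, ENNReal.toReal_mul, hK'def, ENNReal.toReal_ofReal hKpos.le] at h1
  have ha_ge : ∀ p q : ℕ, K⁻¹ * a q * a p ≤ a (p + q) := by
    intro p q
    have h1 := ENNReal.toReal_mono (hGne (p + q) x0) (hsup q p x0)
    rwa [ENNReal.toReal_mul, ENNReal.toReal_mul, ENNReal.toReal_inv, hK'def,
      ENNReal.toReal_ofReal hKpos.le] at h1
  have hub_a : ∀ n : ℕ, a n ≤ Real.exp (n * M) := by
    intro n
    have h1 := ENNReal.toReal_mono ENNReal.ofReal_ne_top (hGub n x0)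
    rwa [ENNReal.toReal_ofReal (Real.exp_nonneg _)] at h1
  have hlb_a : ∀ n : ℕ, Real.exp (-(n * M)) ≤ a n := by
    intro n
    have h1 := ENNReal.toReal_mono (hGne n x0) (hGlb n x0)
    rwa [ENNReal.toReal_ofReal (Real.exp_nonneg _)] at h1
  -- Fekete for the upper sequence
  set u : ℕ → ℝ := fun n => Real.log (K * a n) with hudef
  have hu : Subadditive u := by
    intro p q
    have h1 : a (p + q) ≤ K * a q * a p := ha_le p q
    have h2 : K * a (p + q) ≤ (K * a p) * (K * a q) := by
      nlinarith [hapos p, hapos q, hapos (p + q), hKpos]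
    calc u (p + q) = Real.log (K * a (p + q)) := rfl
      _ ≤ Real.log ((K * a p) * (K * a q)) := Real.log_le_log (mul_pos hKpos (hapos (p+q))) h2
      _ = u p + u q := Real.log_mul (mul_pos hKpos (hapos p)).ne' (mul_pos hKpos (hapos q)).ne'
  have hu_lb : ∀ n : ℕ, -(n * M) ≤ u n := by
    intro n
    have h1 : Real.exp (-(n * M)) ≤ K * a n := by
      nlinarith [hlb_a n, hapos n, hK1, Real.exp_pos (-(n * M : ℝ))]
    calc -(n * M : ℝ) = Real.log (Real.exp (-(n * M))) := (Real.log_exp _).symm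
      _ ≤ Real.log (K * a n) := Real.log_le_log (Real.exp_pos _) h1
  have hbddu : BddBelow (Set.range fun n : ℕ => u n / n) := by
    refine ⟨-M, ?_⟩
    rintro r ⟨n, rfl⟩
    rcases Nat.eq_zero_or_pos n with h | h
    · subst h; simpa using neg_nonpos.mpr hMnn
    · have hn : (0:ℝ) < n := by exact_mod_cast h
      rw [le_div_iff₀ hn]
      have h1 := hu_lb n
      nlinarith
  set ℓ : ℝ := hu.lim with hldef
  have htu : Tendsto (fun n : ℕ => u n / n) atTop (𝓝 ℓ) := hu.tendsto_lim hbddu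
  have hlog_a : Tendsto (fun n : ℕ => Real.log (a n) / n) atTop (𝓝 ℓ) := by
    have h1 : Tendsto (fun n : ℕ => Real.log K / n) atTop (𝓝 0) :=
      tendsto_const_div_atTop_nhds_zero_nat _
    have h2 := htu.sub h1
    rw [sub_zero] at h2
    refine h2.congr fun n => ?_
    show u n / n - Real.log K / n = Real.log (a n) / n
    rw [show u n = Real.log (K * a n) from rfl, Real.log_mul hKpos.ne' (hapos n).ne', add_div]
    ring
  -- Fekete for the lower sequence
  set w : ℕ → ℝ := fun n => Real.log K - Real.log (a n) with hwdef
  have hw : Subadditive w := by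
    intro p q
    have h1 : K⁻¹ * a q * a p ≤ a (p + q) := ha_ge p q
    have h2 : Real.log (K⁻¹ * a q * a p) ≤ Real.log (a (p + q)) :=
      Real.log_le_log (mul_pos (mul_pos (inv_pos.2 hKpos) (hapos q)) (hapos p)) h1
    rw [Real.log_mul (mul_pos (inv_pos.2 hKpos) (hapos q)).ne' (hapos p).ne',
      Real.log_mul (inv_pos.2 hKpos).ne' (hapos q).ne', Real.log_inv] at h2
    show Real.log K - Real.log (a (p + q))
      ≤ (Real.log K - Real.log (a p)) + (Real.log K - Real.log (a q))
    linarith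
  have hw_lb : ∀ n : ℕ, -(n * M) ≤ w n := by
    intro n
    have h1 : Real.log (a n) ≤ n * M := by
      calc Real.log (a n) ≤ Real.log (Real.exp (n * M)) := Real.log_le_log (hapos n) (hub_a n)
        _ = n * M := Real.log_exp _
    have h2 : 0 ≤ Real.log K := Real.log_nonneg hK1
    show -(n * M : ℝ) ≤ Real.log K - Real.log (a n)
    linarith
  have hbddw : BddBelow (Set.range fun n : ℕ => w n / n) := by
    refine ⟨-M, ?_⟩
    rintro r ⟨n, rfl⟩
    rcases Nat.eq_zero_or_pos n with h | h
    · subst h; simpa using neg_nonpos.mpr hMnn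
    · have hn : (0:ℝ) < n := by exact_mod_cast h
      rw [le_div_iff₀ hn]
      have h1 := hw_lb n
      nlinarith
  have htw : Tendsto (fun n : ℕ => w n / n) atTop (𝓝 (-ℓ)) := by
    have h1 : Tendsto (fun n : ℕ => Real.log K / n) atTop (𝓝 0) :=
      tendsto_const_div_atTop_nhds_zero_nat _
    have h2 := h1.sub hlog_a
    rw [zero_sub] at h2
    refine h2.congr fun n => ?_
    show Real.log K / n - Real.log (a n) / n = w n / n
    rw [show w n = Real.log K - Real.log (a n) from rfl, sub_div]
  have hwlim : hw.lim = -ℓ := tendsto_nhds_unique (hw.tendsto_lim hbddw) htw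
  -- explicit exponential bounds for `a`
  have hlow_a : ∀ n : ℕ, n ≠ 0 → Real.exp (n * ℓ) / K ≤ a n := by
    intro n hn
    have hnpos : (0:ℝ) < n := by exact_mod_cast Nat.pos_of_ne_zero hn
    have h1 : ℓ ≤ u n / n := hu.lim_le_div hbddu hn
    have h2 : ℓ * n ≤ u n := (le_div_iff₀ hnpos).1 h1
    have h3 : Real.exp ((n:ℝ) * ℓ) ≤ K * a n := by
      calc Real.exp ((n:ℝ) * ℓ) ≤ Real.exp (u n) := by
            refine Real.exp_le_exp.2 ?_
            rw [mul_comm]; exact h2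
        _ = K * a n := Real.exp_log (mul_pos hKpos (hapos n))
    rw [div_le_iff₀ hKpos]
    nlinarith [hapos n]
  have hupp_a : ∀ n : ℕ, n ≠ 0 → a n ≤ K * Real.exp (n * ℓ) := by
    intro n hn
    have hnpos : (0:ℝ) < n := by exact_mod_cast Nat.pos_of_ne_zero hn
    have h1 : -ℓ ≤ w n / n := by rw [← hwlim]; exact hw.lim_le_div hbddw hn
    have h2 : -ℓ * n ≤ w n := (le_div_iff₀ hnpos).1 h1
    have h3 : Real.log (a n) ≤ Real.log K + n * ℓ := by
      have h4 : w n = Real.log K - Real.log (a n) := rfl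
      nlinarith
    calc a n = Real.exp (Real.log (a n)) := (Real.exp_log (hapos n)).symm
      _ ≤ Real.exp (Real.log K + n * ℓ) := Real.exp_le_exp.2 h3
      _ = K * Real.exp (n * ℓ) := by rw [Real.exp_add, Real.exp_log hKpos]
  -- comparison of a general point with the base point, in the reals
  have hge : ∀ (n : ℕ) (x : X), a n ≤ K * (G n x).toReal := by
    intro n x
    have h1 := ENNReal.toReal_mono (ENNReal.mul_ne_top hK'ne (hGne n x)) (hcomp n x0 x)
    rwa [ENNReal.toReal_mul, hK'def, ENNReal.toReal_ofReal hKpos.le] at h1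
  have hle : ∀ (n : ℕ) (x : X), (G n x).toReal ≤ K * a n := by
    intro n x
    have h1 := ENNReal.toReal_mono (ENNReal.mul_ne_top hK'ne (hGne n x0)) (hcomp n x x0)
    rwa [ENNReal.toReal_mul, hK'def, ENNReal.toReal_ofReal hKpos.le] at h1
  have hgpos : ∀ (n : ℕ) (x : X), 0 < (G n x).toReal := fun n x =>
    ENNReal.toReal_pos (hGpos n x).ne' (hGne n x)
  refine ⟨ENNReal.ofReal (Real.exp ℓ), ENNReal.ofReal_pos.2 (Real.exp_pos _),
    ENNReal.ofReal_ne_top, ?_, ?_⟩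
  · -- the limsup statement
    intro x
    have hsq : Tendsto (fun n : ℕ => Real.log ((G n x).toReal) / n) atTop (𝓝 ℓ) := by
      have hlo : Tendsto (fun n : ℕ => (Real.log (a n) - Real.log K) / n) atTop (𝓝 ℓ) := by
        have h1 := hlog_a.sub (tendsto_const_div_atTop_nhds_zero_nat (Real.log K))
        rw [sub_zero] at h1
        refine h1.congr fun n => ?_
        rw [sub_div]
      have hhi : Tendsto (fun n : ℕ => (Real.log K + Real.log (a n)) / n) atTop (𝓝 ℓ) := by
        have h1 := (tendsto_const_div_atTop_nhds_zero_nat (Real.log K)).add hlog_a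
        rw [zero_add] at h1
        refine h1.congr fun n => ?_
        rw [add_div]
      refine tendsto_of_tendsto_of_tendsto_of_le_of_le' hlo hhi ?_ ?_
      · filter_upwards [eventually_ge_atTop 1] with n hn
        have hnpos : (0:ℝ) < n := by exact_mod_cast hn
        have h1 : Real.log (a n) - Real.log K ≤ Real.log ((G n x).toReal) := by
          have h2 : Real.log (a n) ≤ Real.log (K * (G n x).toReal) :=
            Real.log_le_log (hapos n) (hge n x)
          rw [Real.log_mul hKpos.ne' (hgpos n x).ne'] at h2
          linarith
        gcongr
      · filter_upwards [eventually_ge_atTop 1] with n hn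
        have hnpos : (0:ℝ) < n := by exact_mod_cast hn
        have h1 : Real.log ((G n x).toReal) ≤ Real.log K + Real.log (a n) := by
          have h2 : Real.log ((G n x).toReal) ≤ Real.log (K * a n) :=
            Real.log_le_log (hgpos n x) (hle n x)
          rwa [Real.log_mul hKpos.ne' (hapos n).ne'] at h2
        gcongr
    have hexp : Tendsto (fun n : ℕ =>
        ENNReal.ofReal (Real.exp (Real.log ((G n x).toReal) / n))) atTop
        (𝓝 (ENNReal.ofReal (Real.exp ℓ))) :=
      (ENNReal.continuous_ofReal.tendsto _).comp ((Real.continuous_exp.tendsto _).comp hsq)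
    have hfinal : Tendsto (fun n : ℕ =>
        (ENNReal.ofReal (L^[n] (fun _ => 1) x)) ^ ((1:ℝ)/(n:ℝ))) atTop
        (𝓝 (ENNReal.ofReal (Real.exp ℓ))) := by
      refine hexp.congr' ?_
      filter_upwards [eventually_ge_atTop 1] with n hn
      have hnpos : (0:ℝ) < n := by exact_mod_cast hn
      show ENNReal.ofReal (Real.exp (Real.log ((G n x).toReal) / n))
        = (ENNReal.ofReal (L^[n] (fun _ => 1) x)) ^ ((1:ℝ)/(n:ℝ))
      rw [hGrepr n x, ENNReal.ofReal_rpow_of_pos (hgpos n x)]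
      congr 1
      rw [Real.rpow_def_of_pos (hgpos n x), mul_one_div]
    exact hfinal.limsup_eq
  · -- the two-sided exponential bounds
    refine ⟨(K * K)⁻¹, K * K, by positivity, by positivity, ?_⟩
    intro n hn x
    have hn0 : n ≠ 0 := by omega
    have hpow : (ENNReal.ofReal (Real.exp ℓ)).toReal ^ n = Real.exp (n * ℓ) := by
      rw [ENNReal.toReal_ofReal (Real.exp_nonneg _), ← Real.exp_nat_mul]
    constructor
    · rw [hGrepr n x, hpow, inv_mul_le_iff₀ (by positivity)]
      have h1 : Real.exp ((n:ℝ) * ℓ) ≤ a n * K := (div_le_iff₀ hKpos).1 (hlow_a n hn0)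
      have h2 := hge n x
      nlinarith [hKpos, hgpos n x, hapos n]
    · rw [hGrepr n x, hpow]
      have h1 := hupp_a n hn0
      have h2 := hle n x
      nlinarith [hKpos, hgpos n x, hapos n, Real.exp_pos ((n:ℝ) * ℓ)]
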